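/- arXiv:2509.11657 — 3 statements merged into one kernel-verified Lean document; each statement's English description precedes it below -/
import Mathlib

section
/- Let F = (G + r₁) − (H + r₂) where G + r₁ is ρ₁-strongly convex, H + r₂ is ρ₂-strongly convex with H and r₂ differentiable, and set ρ = ρ₁ + ρ₂. Suppose x^{t+1} minimizes x ↦ G(x) + r₁(x) − ⟨g + ∇r₂(x^t), x⟩ for some vector g. Then for any γ ∈ (0, ρ): F(x^{t+1}) ≤ F(x^t) + (1/(2γ))‖g − ∇H(x^t)‖² − ((ρ − γ)/2)‖x^{t+1} − x^t‖². -/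
open RealInnerProductSpace

section Aux

variable {n : ℕ}

/-- Gradient inequality for a convex function (FDeriv form). -/
lemma aux_convex_fderiv_ineq {f : EuclideanSpace ℝ (Fin n) → ℝ}
    {L : EuclideanSpace ℝ (Fin n) →L[ℝ] ℝ} {x y : EuclideanSpace ℝ (Fin n)}
    (hconv : ConvexOn ℝ Set.univ f) (hd : HasFDerivAt f L x) :
    f x + L (y - x) ≤ f y := by
  have hline : HasDerivAt (fun t : ℝ => (AffineMap.lineMap (k := ℝ) x y) t) (y - x) 0 := by
    have h0 : HasDerivAt (fun t : ℝ => t • (y - x) + x) (y - x) 0 := by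
      simpa using ((hasDerivAt_id (0 : ℝ)).smul_const (y - x)).add_const x
    have heq : (fun t : ℝ => t • (y - x) + x) = fun t : ℝ => (AffineMap.lineMap (k := ℝ) x y) t := by
      funext t
      simp [AffineMap.lineMap_apply]
    rwa [heq] at h0
  have hψconv : ConvexOn ℝ Set.univ (f ∘ (AffineMap.lineMap (k := ℝ) x y)) := by
    have := hconv.comp_affineMap (AffineMap.lineMap (k := ℝ) x y)
    apply this.subset _ convex_univ
    intro t _; simp
  have h0 : (AffineMap.lineMap (k := ℝ) x y) (0 : ℝ) = x := AffineMap.lineMap_apply_zero x y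
  have hψd : HasDerivAt (f ∘ (AffineMap.lineMap (k := ℝ) x y)) (L (y - x)) 0 := by
    have hd' : HasFDerivAt f L ((AffineMap.lineMap (k := ℝ) x y) (0 : ℝ)) := by
      rw [h0]; exact hd
    exact hd'.comp_hasDerivAt 0 hline
  have := hψconv.le_slope_of_hasDerivAt (Set.mem_univ (0:ℝ)) (Set.mem_univ (1:ℝ))
    zero_lt_one hψd
  rw [slope_def_field] at this
  simp only [Function.comp_apply, AffineMap.lineMap_apply_zero, AffineMap.lineMap_apply_one] at this
  have h1 : (f y - f x) / (1 - 0 : ℝ) = f y - f x := by norm_num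
  rw [h1] at this
  linarith

/-- Gradient inequality for a strongly convex function. -/
lemma aux_strong_fderiv_ineq {f : EuclideanSpace ℝ (Fin n) → ℝ} {m : ℝ}
    {f' x y : EuclideanSpace ℝ (Fin n)}
    (hsc : StrongConvexOn Set.univ m f) (hd : HasGradientAt f f' x) :
    f x + ⟪f', y - x⟫ + m / 2 * ‖y - x‖ ^ 2 ≤ f y := by
  have hconv : ConvexOn ℝ Set.univ (fun z => f z - m / 2 * ‖z‖ ^ 2) :=
    (strongConvexOn_iff_convex).mp hsc
  -- derivative of z ↦ ‖z‖^2 is z ↦ 2⟪x,z⟫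
  have hsq : HasFDerivAt (fun z : EuclideanSpace ℝ (Fin n) => ‖z‖ ^ 2)
      ((2 : ℝ) • (innerSL ℝ x)) x := by
    have h1 : HasFDerivAt (fun z : EuclideanSpace ℝ (Fin n) => ⟪z, z⟫)
        ((fderivInnerCLM ℝ (x, x)).comp ((ContinuousLinearMap.id ℝ _).prod
          (ContinuousLinearMap.id ℝ _))) x :=
      (hasFDerivAt_id x).inner ℝ (hasFDerivAt_id x)
    have h2 : (fun z : EuclideanSpace ℝ (Fin n) => ⟪z, z⟫) =
        (fun z : EuclideanSpace ℝ (Fin n) => ‖z‖ ^ 2) := by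
      funext z; exact real_inner_self_eq_norm_sq z
    rw [h2] at h1
    convert h1 using 1
    · rfl
    apply ContinuousLinearMap.ext
    intro z
    simp only [ContinuousLinearMap.smul_apply, innerSL_apply_apply,
      ContinuousLinearMap.coe_comp', Function.comp_apply, ContinuousLinearMap.prod_apply,
      ContinuousLinearMap.coe_id', id_eq, fderivInnerCLM_apply, smul_eq_mul]
    rw [real_inner_comm z x]
    ring
  have hL : HasFDerivAt (fun z => f z - m / 2 * ‖z‖ ^ 2)
      ((InnerProductSpace.toDual ℝ _ f' : _ →L[ℝ] ℝ) - (m / 2) • ((2:ℝ) • (innerSL ℝ x))) x :=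
    hd.hasFDerivAt.sub (hsq.const_mul (m / 2))
  have key := aux_convex_fderiv_ineq (y := y) hconv hL
  simp only [ContinuousLinearMap.sub_apply, ContinuousLinearMap.smul_apply,
    InnerProductSpace.toDual_apply_apply, innerSL_apply_apply, smul_eq_mul] at key
  have e1 : ‖y - x‖ ^ 2 = ‖y‖ ^ 2 - 2 * ⟪x, y⟫ + ‖x‖ ^ 2 := by
    rw [norm_sub_sq_real, real_inner_comm y x]
  have e2 : ⟪x, y - x⟫ = ⟪x, y⟫ - ‖x‖ ^ 2 := by
    rw [inner_sub_right, real_inner_self_eq_norm_sq]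
  rw [e2] at key
  rw [e1]
  linarith

/-- A minimizer of a strongly convex function improves by a quadratic. -/
lemma aux_strong_min {φ : EuclideanSpace ℝ (Fin n) → ℝ} {m : ℝ}
    (hφ : StrongConvexOn Set.univ m φ) {x1 : EuclideanSpace ℝ (Fin n)}
    (hmin : ∀ y, φ x1 ≤ φ y) (y : EuclideanSpace ℝ (Fin n)) :
    φ x1 + m / 2 * ‖x1 - y‖ ^ 2 ≤ φ y := by
  set c := m / 2 * ‖x1 - y‖ ^ 2 with hc
  have key : ∀ a b : ℝ, 0 ≤ a → 0 < b → a + b = 1 → φ x1 + a * c ≤ φ y := by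
    intro a b ha hb hab
    have h2 := hφ.2 (Set.mem_univ x1) (Set.mem_univ y) ha hb.le hab
    have h3 := hmin (a • x1 + b • y)
    simp only [smul_eq_mul] at h2
    rw [← hc] at h2
    have hba : b = 1 - a := by linarith
    subst hba
    have h4 : (1 - a) * (φ x1 + a * c) ≤ (1 - a) * φ y := by nlinarith [h2, h3]
    exact (mul_le_mul_iff_right₀ hb).mp h4
  have hseq : ∀ k : ℕ, φ x1 + (1 - 1 / (k + 1)) * c ≤ φ y := by
    intro k
    apply key _ (1 / (k + 1)) _ (by positivity) (by ring)
    have : (1 : ℝ) / (k + 1) ≤ 1 := by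
      rw [div_le_one (by positivity)]
      linarith [Nat.cast_nonneg (α := ℝ) k]
    linarith
  have hlim : Filter.Tendsto (fun k : ℕ => φ x1 + (1 - 1 / (k + 1)) * c)
      Filter.atTop (nhds (φ x1 + (1 - 0) * c)) := by
    apply Filter.Tendsto.const_add
    apply Filter.Tendsto.mul_const
    exact tendsto_const_nhds.sub tendsto_one_div_add_atTop_nhds_zero_nat
  have := le_of_tendsto hlim (Filter.Eventually.of_forall hseq)
  simpa using this

end Aux

/-- Template descent inequality for DCA-PAGE (smooth r₂). -/
theorem dca_page_template_inequality
    {n : ℕ}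
    (G r₁ H r₂ F : EuclideanSpace ℝ (Fin n) → ℝ)
    (H' r₂' : EuclideanSpace ℝ (Fin n) → EuclideanSpace ℝ (Fin n))
    (ρ₁ ρ₂ ρ γ : ℝ)
    (g xt x1 : EuclideanSpace ℝ (Fin n))
    (hGconv : ConvexOn ℝ Set.univ G) (hr₁conv : ConvexOn ℝ Set.univ r₁)
    (hHdiff : ∀ x, HasGradientAt H (H' x) x)
    (hr₂diff : ∀ x, HasGradientAt r₂ (r₂' x) x)
    (hGr₁ : StrongConvexOn Set.univ ρ₁ (fun x => G x + r₁ x))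
    (hHr₂ : StrongConvexOn Set.univ ρ₂ (fun x => H x + r₂ x))
    (hρ : ρ = ρ₁ + ρ₂)
    (hF : ∀ x, F x = G x + r₁ x - (H x + r₂ x))
    (hopt : ∀ y, G x1 + r₁ x1 - ⟪g + r₂' xt, x1⟫ ≤ G y + r₁ y - ⟪g + r₂' xt, y⟫)
    (hγ : γ ∈ Set.Ioo 0 ρ) :
    F x1 ≤ F xt + (1 / (2 * γ)) * ‖g - H' xt‖ ^ 2 - ((ρ - γ) / 2) * ‖x1 - xt‖ ^ 2 := by
  obtain ⟨hγ0, hγρ⟩ := hγ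
  set c := g + r₂' xt with hcdef
  -- gradient of H + r₂ at xt
  have hHr₂grad : HasGradientAt (fun x => H x + r₂ x) (H' xt + r₂' xt) xt := by
    rw [hasGradientAt_iff_hasFDerivAt, map_add]
    exact ((hHdiff xt).hasFDerivAt).add ((hr₂diff xt).hasFDerivAt)
  -- (A) strong convexity gradient inequality for H + r₂
  have hA : (H xt + r₂ xt) + ⟪H' xt + r₂' xt, x1 - xt⟫ + ρ₂ / 2 * ‖x1 - xt‖ ^ 2
      ≤ H x1 + r₂ x1 := aux_strong_fderiv_ineq hHr₂ hHr₂grad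
  -- (B) the perturbed objective is ρ₁-strongly convex
  have hφsc : StrongConvexOn Set.univ ρ₁ (fun y => G y + r₁ y - ⟪c, y⟫) := by
    rw [strongConvexOn_iff_convex]
    have hGr₁' : ConvexOn ℝ Set.univ (fun x => (G x + r₁ x) - ρ₁ / 2 * ‖x‖ ^ 2) :=
      (strongConvexOn_iff_convex).mp hGr₁
    have hconc : ConcaveOn ℝ Set.univ (fun y : EuclideanSpace ℝ (Fin n) => ⟪c, y⟫) := by
      constructor
      · exact convex_univ
      · intro u _ v _ a b ha hb hab
        simp [inner_add_right, inner_smul_right]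
    have := hGr₁'.sub hconc
    convert this using 1
    · rfl
    · rfl
    · rfl
    funext z
    simp only [Pi.sub_apply]
    ring
  have hB := aux_strong_min hφsc hopt xt
  -- inner product algebra
  have hc1 : ⟪c, x1⟫ - ⟪c, xt⟫ = ⟪c, x1 - xt⟫ := by rw [inner_sub_right]
  have hc2 : ⟪c, x1 - xt⟫ - ⟪H' xt + r₂' xt, x1 - xt⟫ = ⟪g - H' xt, x1 - xt⟫ := by
    rw [hcdef, inner_add_left, inner_add_left, inner_sub_left]
    ring
  -- Young's inequality
  have hY : ⟪g - H' xt, x1 - xt⟫ ≤ 1 / (2 * γ) * ‖g - H' xt‖ ^ 2 + γ / 2 * ‖x1 - xt‖ ^ 2 := by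
    have h1 : ⟪g - H' xt, x1 - xt⟫ ≤ ‖g - H' xt‖ * ‖x1 - xt‖ := real_inner_le_norm _ _
    have h2 : 0 ≤ (‖g - H' xt‖ - γ * ‖x1 - xt‖) ^ 2 := sq_nonneg _
    have h3 : ‖g - H' xt‖ * ‖x1 - xt‖ ≤ 1 / (2 * γ) * ‖g - H' xt‖ ^ 2
        + γ / 2 * ‖x1 - xt‖ ^ 2 := by
      rw [div_mul_eq_mul_div, div_add' _ _ _ (by positivity : (2:ℝ) * γ ≠ 0),
        le_div_iff₀ (by positivity)]
      nlinarith
    linarith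
  rw [hF x1, hF xt]
  nlinarith [hB, hA, hc1, hc2, hY]
end

section
/- Let F = (G + r₁) − (H + r₂) where H is ρ_H-strongly convex and differentiable, r₂ is ρ_{r₂}-strongly convex, G + r₁ is ρ_{G+r₁}-strongly convex, and set ρ = ρ_H + ρ_{r₂} + ρ_{G+r₁}. Suppose g + w ∈ ∂(G+r₁)(x⁺) where w ∈ ∂r₂(x). Then for any γ ∈ (0, ρ): F(x⁺) ≤ F(x) + (1/(2γ))‖g − ∇H(x)‖² − ((ρ − γ)/2)‖x⁺ − x‖². -/
open RealInnerProductSpace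

/-- Subdifferential of a function `f` at `x`. -/
def subdiff {n : ℕ} (f : EuclideanSpace ℝ (Fin n) → ℝ) (x : EuclideanSpace ℝ (Fin n)) :
    Set (EuclideanSpace ℝ (Fin n)) :=
  {v | ∀ y, f x + ⟪v, y - x⟫ ≤ f y}

open Filter Topology in
private lemma aux_neBot : (𝓝[Set.Ioo (0:ℝ) 1] 0).NeBot := by
  refine mem_closure_iff_nhdsWithin_neBot.1 ?_
  rw [closure_Ioo one_ne_zero.symm]
  exact Set.left_mem_Icc.2 one_pos.le

open Filter Topology in
private lemma strong_subdiff {n : ℕ} {μ : ℝ} {f : EuclideanSpace ℝ (Fin n) → ℝ}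
    (hf : StrongConvexOn Set.univ μ f) {v x : EuclideanSpace ℝ (Fin n)}
    (hv : v ∈ subdiff f x) (y : EuclideanSpace ℝ (Fin n)) :
    f x + ⟪v, y - x⟫ + μ / 2 * ‖y - x‖ ^ 2 ≤ f y := by
  have h1 : ∀ t ∈ Set.Ioo (0:ℝ) 1,
      f x + ⟪v, y - x⟫ + (1 - t) * (μ / 2 * ‖y - x‖ ^ 2) ≤ f y := by
    intro t ht
    have hcc := hf.2 (Set.mem_univ y) (Set.mem_univ x) ht.1.le
      (by linarith [ht.2] : (0:ℝ) ≤ 1 - t) (by ring)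
    have hz := hv (t • y + (1 - t) • x)
    have hzx : t • y + (1 - t) • x - x = t • (y - x) := by module
    rw [hzx, real_inner_smul_right] at hz
    rw [smul_eq_mul, smul_eq_mul] at hcc
    beta_reduce at hcc
    by_contra h
    push_neg at h
    nlinarith [mul_lt_mul_of_pos_left h ht.1, hz, hcc]
  haveI := aux_neBot
  have hlim : Tendsto (fun t : ℝ => f x + ⟪v, y - x⟫ + (1 - t) * (μ / 2 * ‖y - x‖ ^ 2))
      (𝓝[Set.Ioo (0:ℝ) 1] 0) (𝓝 (f x + ⟪v, y - x⟫ + μ / 2 * ‖y - x‖ ^ 2)) := by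
    have hcont : Continuous
        (fun t : ℝ => f x + ⟪v, y - x⟫ + (1 - t) * (μ / 2 * ‖y - x‖ ^ 2)) := by continuity
    have := (hcont.tendsto 0).mono_left (nhdsWithin_le_nhds (s := Set.Ioo (0:ℝ) 1))
    simpa using this
  exact le_of_tendsto hlim (eventually_mem_nhdsWithin.mono (fun t ht => h1 t ht))

open Filter Topology in
private lemma strong_grad {n : ℕ} {μ : ℝ} {f : EuclideanSpace ℝ (Fin n) → ℝ}
    (hf : StrongConvexOn Set.univ μ f) {v x : EuclideanSpace ℝ (Fin n)}
    (hv : HasGradientAt f v x) (y : EuclideanSpace ℝ (Fin n)) :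
    f x + ⟪v, y - x⟫ + μ / 2 * ‖y - x‖ ^ 2 ≤ f y := by
  set c : ℝ → EuclideanSpace ℝ (Fin n) := fun t => x + t • (y - x) with hc
  have hcd : HasDerivAt c (y - x) 0 := by
    have h := ((hasDerivAt_id (0:ℝ)).smul_const (y - x)).const_add x
    simp only [one_smul] at h
    exact h
  have hd : HasDerivAt (fun t : ℝ => f (c t)) ⟪v, y - x⟫ 0 := by
    have hF : HasFDerivAt f (InnerProductSpace.toDual ℝ _ v) (c 0) := by
      simpa [hc] using hv.hasFDerivAt
    have h := hF.comp_hasDerivAt 0 hcd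
    rw [InnerProductSpace.toDual_apply_apply] at h
    exact h
  rw [hasDerivAt_iff_tendsto_slope] at hd
  have hd' : Tendsto (slope (fun t : ℝ => f (c t)) 0) (𝓝[Set.Ioo (0:ℝ) 1] 0)
      (𝓝 ⟪v, y - x⟫) :=
    hd.mono_left (nhdsWithin_mono 0 (fun t ht => ne_of_gt ht.1))
  have h1 : ∀ t ∈ Set.Ioo (0:ℝ) 1,
      slope (fun t : ℝ => f (c t)) 0 t ≤ f y - f x - (1 - t) * (μ / 2 * ‖y - x‖ ^ 2) := by
    intro t ht
    have hcc := hf.2 (Set.mem_univ y) (Set.mem_univ x) ht.1.le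
      (by linarith [ht.2] : (0:ℝ) ≤ 1 - t) (by ring)
    have hzx : t • y + (1 - t) • x = c t := by
      simp only [hc, sub_smul, smul_sub, one_smul]; abel
    rw [hzx, smul_eq_mul, smul_eq_mul] at hcc
    have hc0 : c 0 = x := by simp [hc]
    rw [slope_def_field]
    simp only [hc0, sub_zero]
    rw [div_le_iff₀ ht.1]
    beta_reduce at hcc
    nlinarith [hcc]
  have hg : Tendsto (fun t : ℝ => f y - f x - (1 - t) * (μ / 2 * ‖y - x‖ ^ 2)) (𝓝[Set.Ioo (0:ℝ) 1] 0)
      (𝓝 (f y - f x - μ / 2 * ‖y - x‖ ^ 2)) := by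
    have hcont : Continuous (fun t : ℝ => f y - f x - (1 - t) * (μ / 2 * ‖y - x‖ ^ 2)) := by continuity
    have := (hcont.tendsto 0).mono_left (nhdsWithin_le_nhds (s := Set.Ioo (0:ℝ) 1))
    simpa using this
  haveI := aux_neBot
  have := le_of_tendsto_of_tendsto hd' hg (eventually_mem_nhdsWithin.mono h1)
  linarith

/-- Template descent inequality for DCA-PAGE without smoothness of r₂. -/
theorem dca_page_template_inequality_nonsmooth
    {n : ℕ}
    (G r₁ H r₂ F : EuclideanSpace ℝ (Fin n) → ℝ)
    (H' : EuclideanSpace ℝ (Fin n) → EuclideanSpace ℝ (Fin n))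
    (ρH ρr₂ ρGr₁ ρ γ : ℝ)
    (g w x xplus : EuclideanSpace ℝ (Fin n))
    (hGconv : ConvexOn ℝ Set.univ G) (hr₁conv : ConvexOn ℝ Set.univ r₁)
    (hGlsc : LowerSemicontinuous G) (hr₁lsc : LowerSemicontinuous r₁)
    (hr₂lsc : LowerSemicontinuous r₂)
    (hHdiff : ∀ y, HasGradientAt H (H' y) y)
    (hHsc : StrongConvexOn Set.univ ρH H)
    (hr₂sc : StrongConvexOn Set.univ ρr₂ r₂)
    (hGr₁sc : StrongConvexOn Set.univ ρGr₁ (fun y => G y + r₁ y))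
    (hρ : ρ = ρH + ρr₂ + ρGr₁)
    (hF : ∀ y, F y = G y + r₁ y - (H y + r₂ y))
    (hw : w ∈ subdiff r₂ x)
    (hsub : g + w ∈ subdiff (fun y => G y + r₁ y) xplus)
    (hγ : γ ∈ Set.Ioo 0 ρ) :
    F xplus ≤ F x + (1 / (2 * γ)) * ‖g - H' x‖ ^ 2 - ((ρ - γ) / 2) * ‖xplus - x‖ ^ 2 := by
  set d := xplus - x with hd
  set a := g - H' x with ha
  have hA := strong_subdiff hGr₁sc hsub x
  have hB := strong_subdiff hr₂sc hw xplus
  have hC := strong_grad hHsc (hHdiff x) xplus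
  -- rewrite inner products
  have hxs : x - xplus = -d := by rw [hd]; abel
  rw [hxs, inner_neg_right, norm_neg] at hA
  have hgw : ⟪g + w, d⟫ = ⟪a, d⟫ + ⟪H' x, d⟫ + ⟪w, d⟫ := by
    rw [ha, inner_sub_left, inner_add_left]; ring
  -- Young's inequality
  have hγ0 : (0:ℝ) < γ := hγ.1
  have hyoung : ⟪a, d⟫ ≤ 1 / (2 * γ) * ‖a‖ ^ 2 + γ / 2 * ‖d‖ ^ 2 := by
    have h1 : ⟪a, d⟫ ≤ ‖a‖ * ‖d‖ := real_inner_le_norm a d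
    have h2 : ‖a‖ * ‖d‖ ≤ 1 / (2 * γ) * ‖a‖ ^ 2 + γ / 2 * ‖d‖ ^ 2 := by
      rw [show 1 / (2 * γ) * ‖a‖ ^ 2 + γ / 2 * ‖d‖ ^ 2
          = (‖a‖ ^ 2 + γ ^ 2 * ‖d‖ ^ 2) / (2 * γ) by field_simp]
      rw [le_div_iff₀ (by linarith)]
      nlinarith [sq_nonneg (‖a‖ - γ * ‖d‖)]
    linarith
  rw [hF xplus, hF x]
  rw [hρ] at *
  nlinarith [hA, hB, hC, hyoung, hgw]
end

section
/- Let T = ⌈(8Δ₀/(ε²ρ)) C⌉ with C = (L+L_{r₂})² + (1−p)L²/(pb′), and suppose p = 1/b′, b = N, b′ = ⌈√N⌉. Then the total gradient computation count b + T(pb + (1−p)b′) is at most N + (16Δ₀/(ε²ρ))((L+L_{r₂})² b′ + (b′−1)L²) + O(b'), i.e., of order O(N + √N/ε²). -/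
/-- Gradient computation count of DCA-PAGE in the finite-sum setting: with
    T = ⌈(8Δ₀/(ε²ρ))C⌉, p = 1/b′, b = N, b′ = ⌈√N⌉, the total count
    b + T(pb + (1−p)b′) is at most N + (16Δ₀/(ε²ρ))((L+Lr₂)²b′ + (b′−1)L²) + 2b′,
    i.e., of order O(N + √N/ε²). -/
theorem gradient_computation_count
    (N : ℕ) (hN : 1 ≤ N) (ε Δ₀ ρ L Lr₂ : ℝ)
    (hε : 0 < ε) (hΔ₀ : 0 < Δ₀) (hρ : 0 < ρ) (hL : 0 < L) (hLr₂ : 0 < Lr₂) :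
    let b' : ℝ := (⌈Real.sqrt N⌉₊ : ℝ)
    let p : ℝ := 1 / b'
    let b : ℝ := (N : ℝ)
    let C : ℝ := (L + Lr₂) ^ 2 + (1 - p) * L ^ 2 / (p * b')
    let T : ℝ := (⌈(8 * Δ₀ / (ε ^ 2 * ρ)) * C⌉₊ : ℝ)
    b + T * (p * b + (1 - p) * b') ≤
      (N : ℝ) + (16 * Δ₀ / (ε ^ 2 * ρ)) * ((L + Lr₂) ^ 2 * b' + (b' - 1) * L ^ 2)
        + 2 * b' := by
  intro b' p b C T
  have hNpos : (0:ℝ) < (N:ℝ) := by exact_mod_cast hN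
  have hsqrt : 0 < Real.sqrt N := Real.sqrt_pos.mpr hNpos
  have hb1 : (1:ℝ) ≤ b' := by
    have h : 1 ≤ ⌈Real.sqrt N⌉₊ := Nat.one_le_iff_ne_zero.mpr (by
      simp only [ne_eq, Nat.ceil_eq_zero, not_le]
      exact hsqrt)
    show (1:ℝ) ≤ ((⌈Real.sqrt N⌉₊ : ℕ) : ℝ)
    exact_mod_cast h
  have hb0 : (0:ℝ) < b' := lt_of_lt_of_le one_pos hb1
  have hsq : (N:ℝ) ≤ b' ^ 2 := by
    have h1 : Real.sqrt N ≤ b' := Nat.le_ceil _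
    have h2 : (N:ℝ) = Real.sqrt N ^ 2 := (Real.sq_sqrt hNpos.le).symm
    rw [h2]
    exact pow_le_pow_left₀ hsqrt.le h1 2
  have hpb' : p * b' = 1 := by rw [show p = 1 / b' from rfl]; exact one_div_mul_cancel hb0.ne'
  have hp1 : (0:ℝ) ≤ 1 - p := by
    have : p ≤ 1 := by
      rw [show p = 1 / b' from rfl]
      exact (div_le_one hb0).mpr hb1
    linarith
  have hCeq : C = (L + Lr₂) ^ 2 + (1 - p) * L ^ 2 := by
    simp [C, hpb']
  have hA : 0 < 8 * Δ₀ / (ε ^ 2 * ρ) := by positivity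
  have hC0 : 0 ≤ C := by rw [hCeq]; positivity
  have hT : T ≤ 8 * Δ₀ / (ε ^ 2 * ρ) * C + 1 :=
    (Nat.ceil_lt_add_one (by positivity)).le
  have hT0 : (0:ℝ) ≤ T := Nat.cast_nonneg _
  have hS : p * b + (1 - p) * b' ≤ 2 * b' := by
    have hpb : p * b = (N:ℝ) / b' := by rw [show p = 1 / b' from rfl]; ring
    have : (N:ℝ) / b' ≤ b' := by
      rw [div_le_iff₀ hb0]; nlinarith
    rw [hpb]
    have : (1 - p) * b' = b' - 1 := by linear_combination (-1 : ℝ) * hpb'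
    nlinarith
  have hS0 : 0 ≤ p * b + (1 - p) * b' := by
    have : 0 < p := by positivity
    have : 0 ≤ p * b := by positivity
    nlinarith
  have key : T * (p * b + (1 - p) * b') ≤ (8 * Δ₀ / (ε ^ 2 * ρ) * C + 1) * (2 * b') :=
    mul_le_mul hT hS hS0 (by positivity)
  have hfinal : (8 * Δ₀ / (ε ^ 2 * ρ) * C + 1) * (2 * b')
      = 16 * Δ₀ / (ε ^ 2 * ρ) * ((L + Lr₂) ^ 2 * b' + (1 - p) * L ^ 2 * b') + 2 * b' := by
    rw [hCeq]; ring
  have hlast : (1 - p) * L ^ 2 * b' = (b' - 1) * L ^ 2 := by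
    linear_combination (-L ^ 2) * hpb'
  rw [hlast] at hfinal
  show b + T * (p * b + (1 - p) * b') ≤ _
  rw [show b = (N:ℝ) from rfl]
  linarith [key, hfinal.le]
end
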